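/- Fix ρ₀ > 0, l > 0 and a positive integer n, and set L = n·l. For the one-dimensional charge density ρ(x) = ρ₀ sin(2π x / l), the total effective surface charge at the right end of the bar — the sum of the partial-cell charge ∫_{L−l+a}^{L} ρ(x) dx and the polarization-termination charge p(a) = (1/l) ∫_a^{a+l} x ρ(x) dx — equals the constant −ρ₀ l / (2π) for every a ∈ [0, l]; in particular it is independent of the choice a of unit cell, even though each summand separately depends on a. -/

import Mathlib

/-- The total effective surface charge at the right end of the bar (partial-cell
charge plus polarization-termination charge) is independent of the choice `a` of
unit cell. -/
theorem total_right_end_charge_independent_of_unit_cell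
    (ρ₀ l : ℝ) (hρ₀ : 0 < ρ₀) (hl : 0 < l) (n : ℕ) (hn : 0 < n)
    (L : ℝ) (hL : L = n * l) :
    ∀ a ∈ Set.Icc (0 : ℝ) l,
      (∫ x in (L - l + a)..L, ρ₀ * Real.sin (2 * Real.pi * x / l))
        + (1 / l) * (∫ x in a..(a + l), x * (ρ₀ * Real.sin (2 * Real.pi * x / l)))
        = -(ρ₀ * l / (2 * Real.pi)) := by
  intro a _
  have hπ := Real.pi_pos
  have hlne : l ≠ 0 := ne_of_gt hl
  set c : ℝ := 2 * Real.pi / l with hcdef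
  have hc : 0 < c := by positivity
  have hcne : c ≠ 0 := hc.ne'
  have harg : ∀ x : ℝ, 2 * Real.pi * x / l = c * x := by
    intro x; rw [hcdef]; field_simp
  have hF1 : ∀ x : ℝ, HasDerivAt (fun y => -(ρ₀ * Real.cos (c * y) / c))
      (ρ₀ * Real.sin (2 * Real.pi * x / l)) x := by
    intro x
    have hx : HasDerivAt (fun y : ℝ => c * y) c x := by
      simpa using (hasDerivAt_id x).const_mul c
    have h := (((hx.cos).const_mul ρ₀).div_const c).neg
    refine h.congr_deriv ?_
    rw [harg]; field_simp
  have hF2 : ∀ x : ℝ, HasDerivAt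
      (fun y => ρ₀ * (Real.sin (c * y) / c ^ 2 - y * Real.cos (c * y) / c))
      (x * (ρ₀ * Real.sin (2 * Real.pi * x / l))) x := by
    intro x
    have hx : HasDerivAt (fun y : ℝ => c * y) c x := by
      simpa using (hasDerivAt_id x).const_mul c
    have h1 := hx.sin.div_const (c ^ 2)
    have h2 := ((hasDerivAt_id x).mul hx.cos).div_const c
    have h := (h1.sub h2).const_mul ρ₀
    refine h.congr_deriv ?_
    rw [harg]; field_simp; simp only [id]; ring
  have hcont1 : Continuous fun x : ℝ => ρ₀ * Real.sin (2 * Real.pi * x / l) := by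
    fun_prop
  have hcont2 : Continuous fun x : ℝ => x * (ρ₀ * Real.sin (2 * Real.pi * x / l)) := by
    fun_prop
  rw [intervalIntegral.integral_eq_sub_of_hasDerivAt (fun x _ => hF1 x)
      (hcont1.intervalIntegrable _ _),
    intervalIntegral.integral_eq_sub_of_hasDerivAt (fun x _ => hF2 x)
      (hcont2.intervalIntegrable _ _)]
  have e1 : c * L = (n : ℝ) * (2 * Real.pi) := by
    rw [hL, hcdef]; field_simp
  have hcosL : Real.cos (c * L) = 1 := by
    rw [e1]
    simp [Real.cos_nat_mul_two_pi n]
  have e2 : c * (L - l + a) = c * a + (((n : ℤ) - 1 : ℤ) : ℝ) * (2 * Real.pi) := by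
    rw [hL, hcdef]; push_cast; field_simp; ring
  have hcos2 : Real.cos (c * (L - l + a)) = Real.cos (c * a) := by
    rw [e2, Real.cos_add_int_mul_two_pi]
  have e3 : c * (a + l) = c * a + 2 * Real.pi := by
    rw [hcdef]; field_simp
  have hcos3 : Real.cos (c * (a + l)) = Real.cos (c * a) := by
    rw [e3, Real.cos_add_two_pi]
  have hsin3 : Real.sin (c * (a + l)) = Real.sin (c * a) := by
    rw [e3, Real.sin_add_two_pi]
  rw [hcosL, hcos2, hcos3, hsin3, hcdef]
  field_simp
  ring
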